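/- Let σ ∈ (0,1) and let f : ℝ^{n−1} → ℝ be locally Lipschitz, and let B = epi f = {(x,ξ) ∈ ℝ^{n−1} × ℝ : ξ ≥ f(x)} ⊆ ℝⁿ. Let x* ∈ ℝ^{n−1} and suppose there exist a neighborhood V of x* in ℝ^{n−1} and μ > 0 such that for every x₀ ∈ V and every proximal subgradient g ∈ ∂_p f(x₀), the one-sided Hölder estimate f(x₀) + ⟨g, x − x₀⟩ − μ‖x − x₀‖^{1+σ} ≤ f(x) holds for all x ∈ V. Then for every closed set A ⊆ ℝⁿ containing b* = (x*, f(x*)), and every constant c > 0 satisfying μ ≤ √c/(2+c)^σ, the set B is σ-Hölder regular with respect to A at b* with constant c. -/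

import Mathlib

open Set Metric Filter Topology RealInnerProductSpace
open scoped ENNReal

variable {E : Type*} [NormedAddCommGroup E] [InnerProductSpace ℝ E]

/-- The (possibly set-valued) metric projection onto a set `S`. -/
noncomputable def projSet (S : Set E) (x : E) : Set E :=
  {s | s ∈ S ∧ ‖x - s‖ = Metric.infDist x S}

/-- The proximal normal cone to `S` at `s`. -/
def proxNormalCone (S : Set E) (s : E) : Set E :=
  {v | ∃ l : ℝ, 0 ≤ l ∧ ∃ u : E, v = l • u ∧ s ∈ projSet S (s + u)}

/-- `B` is `σ`-Hölder regular with respect to `A` at `bs` with constant `c`. -/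
def HolderRegular (A B : Set E) (bs : E) (σ c : ℝ) : Prop :=
  ∃ U ∈ nhds bs, ∀ a' ∈ A ∩ U, ∀ b' ∈ projSet B a' ∩ U, ∀ b ∈ B,
    ‖b - a'‖ ≤ (1 + c) * ‖a' - b'‖ → a' ∈ projSet A b →
    ⟪a' - b', b - b'⟫ ≤ Real.sqrt c * ‖a' - b'‖ ^ (σ + 1) * ‖b - b'‖

/-- The point of `ℝ^{m} × ℝ` (with the Euclidean product norm) built from `x` and `ξ`. -/
noncomputable def toE (m : ℕ) (x : EuclideanSpace ℝ (Fin m)) (ξ : ℝ) :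
    WithLp 2 (EuclideanSpace ℝ (Fin m) × ℝ) :=
  (WithLp.equiv 2 (EuclideanSpace ℝ (Fin m) × ℝ)).symm (x, ξ)

/-- The epigraph of `f`, as a subset of `ℝ^{m} × ℝ`. -/
def epi (m : ℕ) (f : EuclideanSpace ℝ (Fin m) → ℝ) :
    Set (WithLp 2 (EuclideanSpace ℝ (Fin m) × ℝ)) :=
  {p | f ((WithLp.equiv 2 (EuclideanSpace ℝ (Fin m) × ℝ)) p).1 ≤
        ((WithLp.equiv 2 (EuclideanSpace ℝ (Fin m) × ℝ)) p).2}

private lemma norm_toE {m : ℕ} (x : EuclideanSpace ℝ (Fin m)) (a : ℝ) :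
    ‖toE m x a‖ = Real.sqrt (‖x‖ ^ 2 + a ^ 2) := by
  rw [WithLp.prod_norm_eq_of_L2]; norm_num [toE]

private lemma inner_toE {m : ℕ} (x y : EuclideanSpace ℝ (Fin m)) (a b : ℝ) :
    ⟪toE m x a, toE m y b⟫ = ⟪x, y⟫ + a * b := by
  rw [WithLp.prod_inner_apply]; norm_num [toE, RCLike.inner_apply]; ring

private lemma fst_le_norm_toE {m : ℕ} (x : EuclideanSpace ℝ (Fin m)) (a : ℝ) :
    ‖x‖ ≤ ‖toE m x a‖ := by
  rw [norm_toE]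
  calc ‖x‖ = Real.sqrt (‖x‖ ^ 2) := (Real.sqrt_sq (norm_nonneg x)).symm
    _ ≤ _ := Real.sqrt_le_sqrt (by nlinarith [sq_nonneg a])

private lemma snd_le_norm_toE {m : ℕ} (x : EuclideanSpace ℝ (Fin m)) (a : ℝ) :
    |a| ≤ ‖toE m x a‖ := by
  rw [norm_toE]
  calc |a| = Real.sqrt (a ^ 2) := (Real.sqrt_sq_eq_abs a).symm
    _ ≤ _ := Real.sqrt_le_sqrt (by nlinarith [sq_nonneg ‖x‖])

set_option maxHeartbeats 1000000 in
theorem stmt9 {m : ℕ} (σ : ℝ) (hσ : σ ∈ Set.Ioo (0:ℝ) 1)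
    (f : EuclideanSpace ℝ (Fin m) → ℝ) (hf : LocallyLipschitz f)
    (xs : EuclideanSpace ℝ (Fin m)) (V : Set (EuclideanSpace ℝ (Fin m))) (hV : V ∈ nhds xs)
    (μ : ℝ) (hμ : 0 < μ)
    (hest : ∀ x₀ ∈ V, ∀ g : EuclideanSpace ℝ (Fin m),
      toE m g (-1) ∈ proxNormalCone (epi m f) (toE m x₀ (f x₀)) →
      ∀ x ∈ V, f x₀ + ⟪g, x - x₀⟫ - μ * ‖x - x₀‖ ^ ((1:ℝ) + σ) ≤ f x) :
    ∀ A : Set (WithLp 2 (EuclideanSpace ℝ (Fin m) × ℝ)), IsClosed A →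
      toE m xs (f xs) ∈ A → ∀ c : ℝ, 0 < c → μ ≤ Real.sqrt c / (2 + c) ^ σ →
      HolderRegular A (epi m f) (toE m xs (f xs)) σ c := by
  intro A _hA _hbsA c hc hμc
  obtain ⟨K, t, ht, hK⟩ := hf xs
  obtain ⟨δ, hδ, hball⟩ := Metric.mem_nhds_iff.1 (Filter.inter_mem hV ht)
  set bs := toE m xs (f xs) with hbs
  set ε := δ / (4 + 2 * c) with hεdef
  have hεpos : 0 < ε := by positivity
  have hεδ : ε < δ := by
    rw [hεdef, div_lt_iff₀ (by linarith)]; nlinarith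
  refine ⟨Metric.ball bs ε, Metric.ball_mem_nhds _ hεpos, ?_⟩
  rintro a' ⟨_haA, haU⟩ b' ⟨⟨hbB, hbdist⟩, hbU⟩ b hbB2 hble _hproj
  -- names for components
  set y := a'.fst with hy
  set η := a'.snd with hη
  set x₀ := b'.fst with hx₀
  set β := b'.snd with hβd
  set x := b.fst with hxd
  set ξ := b.snd with hξd
  have ha' : a' = toE m y η := rfl
  have hb' : b' = toE m x₀ β := rfl
  have hb : b = toE m x ξ := rfl
  have hfx₀β : f x₀ ≤ β := hbB
  have hfxξ : f x ≤ ξ := hbB2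
  set r := ‖a' - b'‖ with hrdef
  rcases eq_or_lt_of_le (norm_nonneg (a' - b')) with hr0 | hr
  · -- degenerate case : a' = b'
    have hr0' : r = 0 := by rw [hrdef, ← hr0]
    have hsub0 : a' - b' = 0 := by
      have : ‖a' - b'‖ = 0 := by rw [← hrdef, hr0']
      exact sub_eq_zero_of_eq (norm_sub_eq_zero_iff.mp this)
    rw [hsub0, inner_zero_left, hr0', Real.zero_rpow (by linarith [hσ.1] : σ + 1 ≠ 0)]
    simp [Real.sqrt_nonneg]
  -- main case : r > 0
  have hrpos : 0 < r := hr
  -- a helper to derive contradictions from closer points of B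
  have contra : ∀ q ∈ epi m f, ‖a' - q‖ < r → False := by
    intro q hq hlt
    have h1 := Metric.infDist_le_dist_of_mem (x := a') hq
    rw [dist_eq_norm] at h1
    rw [hbdist] at hlt
    linarith
  have haε : ‖a' - bs‖ < ε := by rw [← dist_eq_norm]; exact Metric.mem_ball.1 haU
  have hbε : ‖b' - bs‖ < ε := by rw [← dist_eq_norm]; exact Metric.mem_ball.1 hbU
  have hx₀xs : ‖x₀ - xs‖ < ε := by
    have h1 : ‖x₀ - xs‖ ≤ ‖b' - bs‖ := by
      have e : b' - bs = toE m (x₀ - xs) (β - f xs) := rfl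
      rw [e]; exact fst_le_norm_toE _ _
    linarith
  have hx₀ball : x₀ ∈ Metric.ball xs δ := by
    rw [Metric.mem_ball, dist_eq_norm]; linarith
  have hx₀V : x₀ ∈ V := (hball hx₀ball).1
  have hx₀t : x₀ ∈ t := (hball hx₀ball).2
  -- Step 1 : η ≤ β
  have hηβ : η ≤ β := by
    by_contra h
    push_neg at h
    refine contra (toE m x₀ η) (le_of_lt (lt_of_le_of_lt hfx₀β h)) ?_
    have e1 : a' - toE m x₀ η = toE m (y - x₀) (η - η) := rfl
    have e2 : a' - b' = toE m (y - x₀) (η - β) := rfl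
    rw [e1, hrdef, e2, norm_toE, norm_toE]
    apply Real.sqrt_lt_sqrt (by positivity)
    nlinarith [sq_nonneg (η - β)]
  -- Step 2 : η < β  (no horizontal proximal normals, by local Lipschitzness)
  have hηβ' : η < β := by
    rcases lt_or_eq_of_le hηβ with h | h
    · exact h
    exfalso
    -- η = β ; then y ≠ x₀ since r > 0
    have hyx : y ≠ x₀ := by
      intro hyx0
      have hab : a' = b' := by rw [ha', hb', hyx0, h]
      rw [hrdef, hab, sub_self, norm_zero] at hrpos
      exact lt_irrefl 0 hrpos
    set ρ := ‖y - x₀‖ with hρdef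
    have hρ : 0 < ρ := by
      rw [hρdef, norm_pos_iff]; exact sub_ne_zero_of_ne hyx
    have hrρ : r = ρ := by
      have e2 : a' - b' = toE m (y - x₀) (η - β) := rfl
      rw [hrdef, e2, norm_toE, h, sub_self]
      simp [Real.sqrt_sq hρ.le]
      exact hρdef.symm
    set s : ℝ := min (1 / (1 + (K : ℝ) ^ 2)) ((δ - ε) / (2 * ρ)) with hsdef
    have hs0 : 0 < s := by
      apply lt_min
      · positivity
      · apply div_pos (by linarith) (by positivity)
    have hs1 : s * (1 + (K : ℝ) ^ 2) ≤ 1 := by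
      have h1 := min_le_left (1 / (1 + (K : ℝ) ^ 2)) ((δ - ε) / (2 * ρ))
      rw [← hsdef] at h1
      calc s * (1 + (K:ℝ)^2) ≤ (1 / (1 + (K : ℝ) ^ 2)) * (1 + (K:ℝ)^2) :=
            mul_le_mul_of_nonneg_right h1 (by positivity)
        _ = 1 := by field_simp
    have hsle1 : s ≤ 1 := by nlinarith [sq_nonneg (K : ℝ)]
    have hsρ : s * ρ < δ - ε := by
      have h2 := min_le_right (1 / (1 + (K : ℝ) ^ 2)) ((δ - ε) / (2 * ρ))
      rw [← hsdef] at h2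
      have h3 : s * ρ ≤ (δ - ε) / 2 := by
        calc s * ρ ≤ ((δ - ε) / (2 * ρ)) * ρ := mul_le_mul_of_nonneg_right h2 hρ.le
          _ = (δ - ε) / 2 := by field_simp
      linarith
    set p := x₀ + s • (y - x₀) with hpdef
    have hpball : p ∈ Metric.ball xs δ := by
      rw [Metric.mem_ball, dist_eq_norm]
      have h1 : ‖p - xs‖ ≤ ‖x₀ - xs‖ + ‖s • (y - x₀)‖ := by
        rw [show p - xs = (x₀ - xs) + s • (y - x₀) by rw [hpdef]; abel]
        exact norm_add_le _ _
      have h3 : ‖s • (y - x₀)‖ = s * ρ := by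
        rw [norm_smul, Real.norm_eq_abs, abs_of_pos hs0, hρdef]
      linarith
    have hdistpx : dist p x₀ = s * ρ := by
      rw [dist_eq_norm, show p - x₀ = s • (y - x₀) by rw [hpdef]; abel]
      rw [norm_smul, Real.norm_eq_abs, abs_of_pos hs0, hρdef]
    have hfp : f p ≤ f x₀ + (K : ℝ) * (s * ρ) := by
      have h4 := hK.dist_le_mul p (hball hpball).2 x₀ hx₀t
      rw [Real.dist_eq, hdistpx] at h4
      have h6 : f p - f x₀ ≤ |f p - f x₀| := le_abs_self _
      linarith
    refine contra (toE m p (β + (K : ℝ) * (s * ρ)))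
      (show f p ≤ β + (K : ℝ) * (s * ρ) by linarith) ?_
    have e3 : a' - toE m p (β + (K : ℝ) * (s * ρ))
        = toE m ((1 - s) • (y - x₀)) (η - (β + (K : ℝ) * (s * ρ))) := by
      rw [ha']
      show toE m (y - p) (η - (β + (K : ℝ) * (s * ρ))) = _
      congr 1
      rw [hpdef]; module
    rw [e3, norm_toE, hrρ]
    have h7 : ‖(1 - s) • (y - x₀)‖ = (1 - s) * ρ := by
      rw [norm_smul, Real.norm_eq_abs, abs_of_nonneg (by linarith), hρdef]
    rw [h7, h]
    have h8 : ((1 - s) * ρ) ^ 2 + (β - (β + (K:ℝ) * (s * ρ))) ^ 2 < ρ ^ 2 := by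
      have h9 := mul_le_mul_of_nonneg_left hs1 (mul_nonneg hs0.le (sq_nonneg ρ))
      have h10 := mul_pos hs0 (pow_pos hρ 2)
      nlinarith [h9, h10]
    calc Real.sqrt (((1 - s) * ρ) ^ 2 + (β - (β + (K:ℝ) * (s * ρ))) ^ 2)
        < Real.sqrt (ρ ^ 2) := Real.sqrt_lt_sqrt (by positivity) h8
      _ = ρ := Real.sqrt_sq hρ.le
  -- Step 3 : β = f x₀
  have hβf : β = f x₀ := by
    by_contra hne
    have hfβ : f x₀ < β := lt_of_le_of_ne hfx₀β (fun h' => hne h'.symm)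
    set β' := max η (f x₀) with hβ'def
    have hβ'lt : β' < β := max_lt hηβ' hfβ
    have hηleβ' : η ≤ β' := le_max_left _ _
    refine contra (toE m x₀ β') (show f x₀ ≤ β' from le_max_right η (f x₀)) ?_
    have e1 : a' - toE m x₀ β' = toE m (y - x₀) (η - β') := rfl
    have e2 : a' - b' = toE m (y - x₀) (η - β) := rfl
    rw [e1, hrdef, e2, norm_toE, norm_toE]
    apply Real.sqrt_lt_sqrt (by positivity)
    nlinarith
  -- the proximal subgradient
  set lam := β - η with hlam
  have hlam0 : 0 < lam := by rw [hlam]; linarith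
  set g := lam⁻¹ • (y - x₀) with hg
  have hb'toE : toE m x₀ (f x₀) = b' := by rw [← hβf]; exact hb'.symm
  have hgmem : toE m g (-1) ∈ proxNormalCone (epi m f) (toE m x₀ (f x₀)) := by
    rw [hb'toE]
    refine ⟨lam⁻¹, by positivity, a' - b', ?_, ?_⟩
    · have e2 : a' - b' = toE m (y - x₀) (η - β) := rfl
      rw [e2]
      show toE m g (-1) = toE m (lam⁻¹ • (y - x₀)) (lam⁻¹ * (η - β))
      rw [← hg]
      congr 1
      rw [show η - β = -lam by rw [hlam]; ring, mul_neg, inv_mul_cancel₀ (ne_of_gt hlam0)]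
    · rw [show b' + (a' - b') = a' by abel]
      exact ⟨hbB, hbdist⟩
  -- x ∈ V
  have hr2ε : r < 2 * ε := by
    have h1 : ‖a' - b'‖ ≤ ‖a' - bs‖ + ‖b' - bs‖ := by
      rw [show a' - b' = (a' - bs) - (b' - bs) by abel]
      exact norm_sub_le _ _
    rw [hrdef]; linarith
  have hxxs : ‖x - xs‖ < δ := by
    have h1 : ‖x - xs‖ ≤ ‖b - bs‖ := by
      have e : b - bs = toE m (x - xs) (ξ - f xs) := rfl
      rw [e]; exact fst_le_norm_toE _ _
    have h2 : ‖b - bs‖ ≤ ‖b - a'‖ + ‖a' - bs‖ := by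
      rw [show b - bs = (b - a') + (a' - bs) by abel]
      exact norm_add_le _ _
    have h3 : (3 + 2 * c) * ε < δ := by
      have h4 : (3 + 2 * c) * (δ / (4 + 2 * c)) < (4 + 2 * c) * (δ / (4 + 2 * c)) :=
        mul_lt_mul_of_pos_right (by linarith) hεpos
      have h5 : (4 + 2 * c) * (δ / (4 + 2 * c)) = δ := by field_simp
      rw [hεdef]; linarith
    have h6 := mul_lt_mul_of_pos_left hr2ε (by linarith : (0:ℝ) < 1 + c)
    linarith
  have hxV : x ∈ V := (hball (by rw [Metric.mem_ball, dist_eq_norm]; exact hxxs)).1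
  -- the estimate from the hypothesis
  have key := hest x₀ hx₀V g hgmem x hxV
  have hkey2 : ⟪g, x - x₀⟫ - (ξ - f x₀) ≤ μ * ‖x - x₀‖ ^ ((1:ℝ) + σ) := by
    linarith
  -- compute the inner product
  have hlhs : ⟪a' - b', b - b'⟫ = lam * ⟪g, x - x₀⟫ - lam * (ξ - f x₀) := by
    have e2 : a' - b' = toE m (y - x₀) (η - β) := rfl
    have e4 : b - b' = toE m (x - x₀) (ξ - β) := rfl
    rw [e2, e4, inner_toE]
    have hyg : y - x₀ = lam • g := by
      rw [hg, smul_smul, mul_inv_cancel₀ (ne_of_gt hlam0), one_smul]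
    rw [hyg, real_inner_smul_left]
    rw [show η - β = -lam by rw [hlam]; ring, hβf]
    ring
  have hmain : ⟪a' - b', b - b'⟫ ≤ lam * (μ * ‖x - x₀‖ ^ ((1:ℝ) + σ)) := by
    rw [hlhs]
    have h1 := mul_le_mul_of_nonneg_left hkey2 hlam0.le
    linarith
  -- bounds
  have hlamr : lam ≤ r := by
    have e2 : a' - b' = toE m (y - x₀) (η - β) := rfl
    have h1 : |η - β| ≤ ‖a' - b'‖ := by rw [e2]; exact snd_le_norm_toE _ _
    have h2 : |η - β| = lam := by
      rw [hlam, abs_sub_comm, abs_of_pos (by linarith : (0:ℝ) < β - η)]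
    rw [hrdef]; linarith
  have hND : ‖x - x₀‖ ≤ ‖b - b'‖ := by
    have e4 : b - b' = toE m (x - x₀) (ξ - β) := rfl
    rw [e4]; exact fst_le_norm_toE _ _
  have hDr : ‖b - b'‖ ≤ (2 + c) * r := by
    have h1 : ‖b - b'‖ ≤ ‖b - a'‖ + ‖a' - b'‖ := by
      rw [show b - b' = (b - a') + (a' - b') by abel]
      exact norm_add_le _ _
    rw [← hrdef] at h1
    linarith
  have hNr : ‖x - x₀‖ ≤ (2 + c) * r := hND.trans hDr
  -- rpow algebra
  have h1σ : (1:ℝ) + σ ≠ 0 := by linarith [hσ.1]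
  have hNσ : ‖x - x₀‖ ^ ((1:ℝ) + σ) = ‖x - x₀‖ * ‖x - x₀‖ ^ σ := by
    rw [Real.rpow_add' (norm_nonneg _) h1σ, Real.rpow_one]
  have h2c : (0:ℝ) < 2 + c := by linarith
  have hNσle : ‖x - x₀‖ ^ σ ≤ (2 + c) ^ σ * r ^ σ := by
    calc ‖x - x₀‖ ^ σ ≤ ((2 + c) * r) ^ σ :=
          Real.rpow_le_rpow (norm_nonneg _) hNr hσ.1.le
      _ = (2 + c) ^ σ * r ^ σ := Real.mul_rpow h2c.le hrpos.le
  have hrσ : r ^ (σ + 1) = r ^ σ * r := by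
    rw [Real.rpow_add' hrpos.le (by linarith [hσ.1] : σ + 1 ≠ 0), Real.rpow_one]
  have hμ2 : μ * (2 + c) ^ σ ≤ Real.sqrt c := by
    rw [← le_div_iff₀ (Real.rpow_pos_of_pos h2c σ)]
    exact hμc
  have hrσpos : (0:ℝ) ≤ r ^ σ := Real.rpow_nonneg hrpos.le σ
  calc ⟪a' - b', b - b'⟫ ≤ lam * (μ * ‖x - x₀‖ ^ ((1:ℝ) + σ)) := hmain
    _ = μ * lam * (‖x - x₀‖ * ‖x - x₀‖ ^ σ) := by rw [hNσ]; ring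
    _ ≤ μ * lam * (‖b - b'‖ * ((2 + c) ^ σ * r ^ σ)) := by
        refine mul_le_mul_of_nonneg_left ?_ (by positivity)
        exact mul_le_mul hND hNσle (Real.rpow_nonneg (norm_nonneg _) σ) (norm_nonneg _)
    _ = (μ * (2 + c) ^ σ) * (lam * (‖b - b'‖ * r ^ σ)) := by ring
    _ ≤ Real.sqrt c * (r * (‖b - b'‖ * r ^ σ)) := by
        refine mul_le_mul hμ2 ?_ ?_ (Real.sqrt_nonneg c)
        · exact mul_le_mul_of_nonneg_right hlamr (by positivity)
        · positivity
    _ = Real.sqrt c * r ^ (σ + 1) * ‖b - b'‖ := by rw [hrσ]; ring
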